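/- Let (0, c, d, e) be the Chern character of a rank-zero object with c > 0 real. The inequality Q_{α,β} = α²c² + 4(d - βc)² - 6c(e - βd + β²c/2) ≥ 0 for all (α, β) with α² + (β - d/c)² ≤ c²/4 and α > 0 implies e ≤ c³/24 + d²/(2c). -/

import Mathlib

theorem rank_zero_ch3_bound (c d e : ℝ) (hc : 0 < c)
    (hQ : ∀ α β : ℝ, 0 ≤ α → α ^ 2 + (β - d / c) ^ 2 ≤ c ^ 2 / 4 →
      α ^ 2 * c ^ 2 + 4 * (d - β * c) ^ 2
        - 6 * c * (e - β * d + β ^ 2 * c / 2) ≥ 0) :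
    e ≤ c ^ 3 / 24 + d ^ 2 / (2 * c) := by
  have h := hQ (c / 2) (d / c) (by positivity) (by ring_nf; simp)
  have hc' : c ≠ 0 := ne_of_gt hc
  rw [ge_iff_le, div_pow, div_pow] at h
  rw [div_add_div _ _ (by norm_num : (24:ℝ) ≠ 0) (by positivity : 2 * c ≠ 0)]
  rw [le_div_iff₀ (by positivity)]
  field_simp at h
  nlinarith [hc, mul_pos hc hc, mul_pos (mul_pos hc hc) hc, sq_nonneg c]
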